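/- Given an ends decomposition M \ K = E_1 ∪ ⋯ ∪ E_m, there exists a connected compact set K' ⊆ M with K ⊆ K' such that for every domain Θ in M containing K', the sets E_j' = E_j ∩ Θ (j = 1,…,m) are exactly the distinct connected components of Θ \ K, each E_j' has noncompact closure in Θ, and hence Θ \ K = E_1' ∪ ⋯ ∪ E_m' is an ends decomposition for Θ. -/

import Mathlib

open Set Filter Topology

/-- A charted space modelled on a locally path-connected space is locally path-connected. -/
theorem MyChartedSpace.locPathConnectedSpace (H : Type*) [TopologicalSpace H]
    (M : Type*) [TopologicalSpace M] [ChartedSpace H M] [LocallyPathConnectedSpace H] :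
    LocallyPathConnectedSpace M := by
  let e : M → OpenPartialHomeomorph M H := chartAt H
  refine LocPathConnectedSpace.of_bases (s := fun x s => (e x).symm '' s)
    (p := fun x s => (s ∈ 𝓝 (e x x) ∧ IsPathConnected s) ∧ s ⊆ (e x).target) ?_ ?_
  · intro x
    simpa only [e, OpenPartialHomeomorph.symm_map_nhds_eq, mem_chart_source, id] using
      ((path_connected_basis (e x x)).restrict_subset
        ((e x).open_target.mem_nhds (mem_chart_target H x))).map (e x).symm
  · rintro x s ⟨⟨-, hs⟩, hssubset⟩
    exact hs.image' ((e x).continuousOn_symm.mono hssubset)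

/-- In a locally connected space, a connected component of an open set is relatively closed. -/
theorem my_closure_connectedComponentIn_inter {M : Type*} [TopologicalSpace M]
    [LocallyConnectedSpace M] {F : Set M} (hF : IsOpen F) (x : M) :
    closure (connectedComponentIn F x) ∩ F = connectedComponentIn F x := by
  apply Subset.antisymm
  · rintro q ⟨hq1, hq2⟩
    obtain ⟨y, hy1, hy2⟩ :=
      mem_closure_iff.mp hq1 _ (hF.connectedComponentIn (x := q)) (mem_connectedComponentIn hq2)
    have h1 : connectedComponentIn F q = connectedComponentIn F y := connectedComponentIn_eq hy1
    have h2 : connectedComponentIn F x = connectedComponentIn F y := connectedComponentIn_eq hy2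
    rw [h2, ← h1]
    exact mem_connectedComponentIn hq2
  · exact subset_inter subset_closure (connectedComponentIn_subset F x)

/-- Any compact subset of an open connected set (in a nice space) is contained in a compact
connected subset. -/
theorem my_exists_compact_connected_superset {M : Type*} [TopologicalSpace M] [T2Space M]
    [LocallyCompactSpace M] [LocallyPathConnectedSpace M]
    {W D : Set M} (hW : IsOpen W) (hWc : IsConnected W) (hD : IsCompact D) (hDW : D ⊆ W) :
    ∃ G, IsCompact G ∧ IsConnected G ∧ D ⊆ G ∧ G ⊆ W := by
  obtain ⟨w₀, hw₀⟩ := hWc.nonempty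
  have hpath : IsPathConnected W := hW.isConnected_iff_isPathConnected.mp hWc
  have key : ∀ x ∈ D, ∃ s : Set M, s ∈ 𝓝 x ∧ IsCompact (closure s) ∧
      IsConnected (closure s) ∧ closure s ⊆ W := by
    intro x hx
    obtain ⟨N, hNc, hxN, hNW⟩ := exists_compact_subset hW (hDW hx)
    obtain ⟨s, ⟨hs_nhds, hs_path⟩, hs_sub⟩ :=
      (path_connected_basis x).mem_iff.mp (isOpen_interior.mem_nhds hxN)
    have hscl : closure s ⊆ N := closure_minimal (hs_sub.trans interior_subset) hNc.isClosed
    exact ⟨s, hs_nhds, hNc.of_isClosed_subset isClosed_closure hscl,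
      hs_path.isConnected.closure, hscl.trans hNW⟩
  choose! s hs_nhds hs_cpt hs_conn hs_W using key
  obtain ⟨t, ht⟩ := hD.elim_nhds_subcover' (fun x hx => s x) (fun x hx => hs_nhds x hx)
  -- the connecting paths
  have hjoin : ∀ x : M, x ∈ D → JoinedIn W x w₀ := fun x hx => hpath.joinedIn x (hDW hx) w₀ hw₀
  let Q : ↥D → Set M := fun x => closure (s x.1) ∪ range (hjoin x.1 x.2).somePath
  have hQconn : ∀ x : ↥D, x.1 ∈ D → IsPreconnected (Q x) := by
    intro x hx
    have hx0 : x.1 ∈ range ⇑(hjoin x.1 x.2).somePath := ⟨0, (hjoin x.1 x.2).somePath.source⟩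
    exact IsPreconnected.union x.1 (subset_closure (mem_of_mem_nhds (hs_nhds x.1 hx))) hx0
      (hs_conn x.1 hx).isPreconnected
      (isConnected_range (hjoin x.1 x.2).somePath.continuous).isPreconnected
  have hQw : ∀ x : ↥D, w₀ ∈ Q x := fun x =>
    Or.inr ⟨1, (hjoin x.1 x.2).somePath.target⟩
  refine ⟨{w₀} ∪ ⋃ x ∈ t, Q x, ?_, ?_, ?_, ?_⟩
  · exact isCompact_singleton.union <| t.finite_toSet.isCompact_biUnion fun x hx =>
      ((hs_cpt x.1 x.2).union (isCompact_range (hjoin x.1 x.2).somePath.continuous))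
  · refine ⟨⟨w₀, Or.inl rfl⟩, ?_⟩
    have : ({w₀} ∪ ⋃ x ∈ t, Q x) = ⋃₀ (insert {w₀} ((fun x : ↥D => Q x) '' ↑t)) := by
      rw [sUnion_insert, sUnion_image, Finset.set_biUnion_coe]
    rw [this]
    apply isPreconnected_sUnion w₀
    · rintro r (rfl | ⟨x, hx, rfl⟩)
      · exact rfl
      · exact hQw x
    · rintro r (rfl | ⟨x, hx, rfl⟩)
      · exact isPreconnected_singleton
      · exact hQconn x x.2
  · intro y hy
    obtain ⟨x, hx, hys⟩ := mem_iUnion₂.mp (ht hy)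
    exact Or.inr (mem_iUnion₂.mpr ⟨x, hx, Or.inl (subset_closure hys)⟩)
  · rintro y (rfl | hy)
    · exact hw₀
    · obtain ⟨x, hx, hyQ⟩ := mem_iUnion₂.mp hy
      rcases hyQ with h | h
      · exact hs_W x.1 x.2 h
      · obtain ⟨u, rfl⟩ := h
        exact (hjoin x.1 x.2).somePath_mem u
/-- An *end* of a topological space `M`: a connected component with noncompact closure
of the complement of some compact set. -/
def IsEnd {M : Type*} [TopologicalSpace M] (E : Set M) : Prop :=
  ∃ K : Set M, IsCompact K ∧ (∃ x ∈ Kᶜ, E = connectedComponentIn Kᶜ x) ∧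
    ¬ IsCompact (closure E)

/-- A *domain* in `M`: a nonempty connected open subset. -/
def IsDomainSet {M : Type*} [TopologicalSpace M] (Ω : Set M) : Prop :=
  IsOpen Ω ∧ IsConnected Ω

/-- `M \ K = E 0 ∪ ⋯ ∪ E (m-1)` is an *ends decomposition*: `K` is compact and the `E j`
are the distinct connected components of `M \ K`, each with noncompact closure. -/
def IsEndsDecomposition {M : Type*} [TopologicalSpace M] (K : Set M)
    {m : ℕ} (E : Fin m → Set M) : Prop :=
  IsCompact K ∧ Function.Injective E ∧
    (∀ j, (∃ x ∈ Kᶜ, E j = connectedComponentIn Kᶜ x) ∧ ¬ IsCompact (closure (E j))) ∧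
    (⋃ j, E j) = Kᶜ

/-- Given an ends decomposition `M \ K = E 0 ∪ ⋯ ∪ E (m-1)` of a connected noncompact
smooth manifold, there is a connected compact set `K' ⊇ K` such that for every domain
`Θ ⊇ K'`, the sets `E j ∩ Θ` are exactly the distinct connected components of `Θ \ K`,
each with noncompact closure in `Θ`; i.e., they give an ends decomposition of `Θ`. -/
theorem ends_decomposition_restricts_to_domains
    {n : ℕ} {M : Type*} [TopologicalSpace M]
    [ChartedSpace (EuclideanSpace ℝ (Fin n)) M]
    [IsManifold (modelWithCornersSelf ℝ (EuclideanSpace ℝ (Fin n))) ((⊤ : ℕ∞) : WithTop ℕ∞) M]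
    [T2Space M] [SecondCountableTopology M] [ConnectedSpace M] [NoncompactSpace M]
    (K : Set M) {m : ℕ} (E : Fin m → Set M) (hE : IsEndsDecomposition K E) :
    ∃ K' : Set M, IsCompact K' ∧ IsConnected K' ∧ K ⊆ K' ∧
      ∀ Θ : Set M, IsDomainSet Θ → K' ⊆ Θ →
        Function.Injective (fun j => E j ∩ Θ) ∧
        (∀ j, (∃ x ∈ Θ \ K, E j ∩ Θ = connectedComponentIn (Θ \ K) x) ∧
          ¬ IsCompact (closure (E j ∩ Θ) ∩ Θ)) ∧
        (⋃ j, E j ∩ Θ) = Θ \ K := by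
  obtain ⟨hK, hEinj, hEprop, hEunion⟩ := hE
  have : LocallyCompactSpace M := ChartedSpace.locallyCompactSpace (EuclideanSpace ℝ (Fin n)) M
  have : LocallyPathConnectedSpace M :=
    MyChartedSpace.locPathConnectedSpace (EuclideanSpace ℝ (Fin n)) M
  have : LocallyConnectedSpace M :=
    ChartedSpace.locallyConnectedSpace (EuclideanSpace ℝ (Fin n)) M
  -- basic facts about the ends
  choose x hx hEeq using fun j => (hEprop j).1
  have hKc : IsClosed K := hK.isClosed
  have hKco : IsOpen (Kᶜ : Set M) := hKc.isOpen_compl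
  have hxE : ∀ j, x j ∈ E j := fun j => (hEeq j) ▸ mem_connectedComponentIn (hx j)
  have hEopen : ∀ j, IsOpen (E j) := fun j => (hEeq j) ▸ hKco.connectedComponentIn
  have hEco : ∀ j, E j ⊆ Kᶜ := fun j => (hEeq j) ▸ connectedComponentIn_subset _ _
  have hEclKc : ∀ j, closure (E j) ∩ Kᶜ = E j := fun j => by
    rw [hEeq j]; exact my_closure_connectedComponentIn_inter hKco _
  have hEcomp : ∀ j, ∀ p ∈ E j, connectedComponentIn (Kᶜ : Set M) p = E j := by
    intro j p hp
    rw [hEeq j] at hp ⊢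
    exact (connectedComponentIn_eq hp).symm
  have hEconn : ∀ j, IsConnected (E j) := fun j =>
    ⟨⟨x j, hxE j⟩, (hEeq j) ▸ isPreconnected_connectedComponentIn⟩
  -- a compact neighborhood of K
  obtain ⟨L, hLc, hKL⟩ := exists_compact_superset hK
  set U := interior L with hUdef
  have hUopen : IsOpen U := isOpen_interior
  have hKU : K ⊆ U := hKL
  have hclU : IsCompact (closure U) := hLc.of_isClosed_subset isClosed_closure
    (closure_minimal interior_subset hLc.isClosed)
  -- the compact "annulus" pieces
  set D : Fin m → Set M := fun j => (closure U \ U) ∩ E j with hDdef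
  have hDclosed : ∀ j, D j = (closure U \ U) ∩ closure (E j) := by
    intro j
    apply Subset.antisymm (inter_subset_inter_right _ subset_closure)
    rintro y ⟨hy1, hy2⟩
    have hyKc : y ∈ (Kᶜ : Set M) := fun hyK => hy1.2 (hKU hyK)
    exact ⟨hy1, (hEclKc j) ▸ (⟨hy2, hyKc⟩ : y ∈ closure (E j) ∩ Kᶜ)⟩
  have hDcpt : ∀ j, IsCompact (D j) := by
    intro j
    rw [hDclosed j]
    exact hclU.of_isClosed_subset ((isClosed_closure.sdiff hUopen).inter isClosed_closure)
      ((inter_subset_left).trans diff_subset)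
  have hDE : ∀ j, D j ⊆ E j := fun j => inter_subset_right
  -- compact connected sets G j ⊆ E j containing D j and x j
  have hG : ∀ j, ∃ G, IsCompact G ∧ IsConnected G ∧ insert (x j) (D j) ⊆ G ∧ G ⊆ E j :=
    fun j => my_exists_compact_connected_superset (hEopen j) (hEconn j)
      ((hDcpt j).insert (x j)) (insert_subset (hxE j) (hDE j))
  choose G hGcpt hGconn hGsub hGE using hG
  -- the compact connected set K'
  obtain ⟨K', hK'cpt, hK'conn, hK'sub, -⟩ := my_exists_compact_connected_superset isOpen_univ
    isConnected_univ (hclU.union (isCompact_iUnion hGcpt)) (subset_univ _)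
  refine ⟨K', hK'cpt, hK'conn, fun y hy => hK'sub (mem_union_left _ (subset_closure (hKU hy))),
    ?_⟩
  rintro Θ ⟨hΘopen, hΘconn⟩ hK'Θ
  have hUΘ : U ⊆ Θ := fun y hy => hK'Θ (hK'sub (mem_union_left _ (subset_closure hy)))
  have hGΘ : ∀ j, G j ⊆ Θ := fun j y hy =>
    hK'Θ (hK'sub (mem_union_right _ (mem_iUnion.mpr ⟨j, hy⟩)))
  have hΘKopen : IsOpen (Θ \ K) := hΘopen.sdiff hKc
  have hxΘ : ∀ j, x j ∈ Θ := fun j => hGΘ j (hGsub j (mem_insert _ _))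
  have hxΘK : ∀ j, x j ∈ Θ \ K := fun j => ⟨hxΘ j, hx j⟩
  -- components of Θ \ K through points of E j ∩ Θ stay in E j ∩ Θ
  have claim1 : ∀ j, ∀ p ∈ E j ∩ Θ, connectedComponentIn (Θ \ K) p ⊆ E j ∩ Θ := by
    intro j p hp
    have hpΘK : p ∈ Θ \ K := ⟨hp.2, hEco j hp.1⟩
    have hsub : connectedComponentIn (Θ \ K) p ⊆ (Kᶜ : Set M) :=
      (connectedComponentIn_subset _ _).trans (fun y hy => hy.2)
    have h1 : connectedComponentIn (Θ \ K) p ⊆ E j := by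
      rw [← hEcomp j p hp.1]
      exact isPreconnected_connectedComponentIn.subset_connectedComponentIn
        (mem_connectedComponentIn hpΘK) hsub
    exact subset_inter h1 ((connectedComponentIn_subset _ _).trans diff_subset)
  -- every such component meets G j, or is all of Θ
  have claim2 : ∀ j, ∀ p ∈ E j ∩ Θ,
      (connectedComponentIn (Θ \ K) p ∩ G j).Nonempty ∨
        connectedComponentIn (Θ \ K) p = Θ := by
    intro j p hp
    set C := connectedComponentIn (Θ \ K) p with hCdef
    have hpΘK : p ∈ Θ \ K := ⟨hp.2, hEco j hp.1⟩
    have hCopen : IsOpen C := hΘKopen.connectedComponentIn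
    have hCcl : closure C ∩ (Θ \ K) = C := my_closure_connectedComponentIn_inter hΘKopen _
    have hCE : C ⊆ E j ∩ Θ := claim1 j p hp
    by_cases hcase : (closure C ∩ K).Nonempty
    · left
      obtain ⟨k₀, hk₀C, hk₀K⟩ := hcase
      obtain ⟨q, hqU, hqC⟩ := mem_closure_iff.mp hk₀C U hUopen (hKU hk₀K)
      have hqKc : q ∈ (Kᶜ : Set M) := hEco j (hCE hqC).1
      have hqUK : q ∈ U \ K := ⟨hqU, hqKc⟩
      set C₀ := connectedComponentIn (U \ K) q with hC0def
      have hUKopen : IsOpen (U \ K) := hUopen.sdiff hKc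
      have hC0sub : C₀ ⊆ C := by
        have h1 : C = connectedComponentIn (Θ \ K) q := connectedComponentIn_eq hqC
        rw [h1]
        exact isPreconnected_connectedComponentIn.subset_connectedComponentIn
          (mem_connectedComponentIn hqUK)
          ((connectedComponentIn_subset _ _).trans (diff_subset_diff_left hUΘ))
      have hC0E : C₀ ⊆ E j := hC0sub.trans (fun y hy => (hCE hy).1)
      have hC0cl : closure C₀ ∩ (U \ K) = C₀ := my_closure_connectedComponentIn_inter hUKopen _
      have hann : (closure C₀ ∩ (closure U \ U)).Nonempty := by
        by_contra hempty
        rw [not_nonempty_iff_eq_empty] at hempty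
        have hclU' : closure C₀ ⊆ U := by
          intro y hy
          have hyU : y ∈ closure U :=
            closure_mono ((connectedComponentIn_subset _ _).trans diff_subset) hy
          by_contra hyU'
          have : y ∈ (∅ : Set M) := hempty ▸ (⟨hy, hyU, hyU'⟩ : y ∈ closure C₀ ∩ (closure U \ U))
          exact this
        have hC0closedKc : closure C₀ ∩ Kᶜ ⊆ C₀ := by
          intro y hy
          exact hC0cl ▸ (⟨hy.1, hclU' hy.1, hy.2⟩ : y ∈ closure C₀ ∩ (U \ K))
        have hC0open : IsOpen C₀ := hUKopen.connectedComponentIn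
        have hqC0 : q ∈ C₀ := mem_connectedComponentIn hqUK
        have hEsub : E j ⊆ C₀ := by
          apply (hEconn j).isPreconnected.subset_left_of_subset_union hC0open
            (hKco.inter isClosed_closure.isOpen_compl)
            (disjoint_left.mpr fun y hyC hyv => hyv.2 (subset_closure hyC))
            ?_ ⟨q, hC0E hqC0, hqC0⟩
          intro y hy
          by_cases hycl : y ∈ closure C₀
          · exact Or.inl (hC0closedKc ⟨hycl, hEco j hy⟩)
          · exact Or.inr ⟨hEco j hy, hycl⟩
        have hEC0 : E j = C₀ := hEsub.antisymm hC0E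
        apply (hEprop j).2
        exact hclU.of_isClosed_subset isClosed_closure
          (by rw [hEC0]; exact hclU'.trans subset_closure)
      obtain ⟨z, hz1, hz2⟩ := hann
      have hzKc : z ∈ (Kᶜ : Set M) := fun h => hz2.2 (hKU h)
      have hzE : z ∈ E j :=
        hEclKc j ▸ (⟨closure_mono hC0E hz1, hzKc⟩ : z ∈ closure (E j) ∩ Kᶜ)
      have hzG : z ∈ G j := hGsub j (mem_insert_of_mem _ ⟨hz2, hzE⟩)
      have hzC : z ∈ C :=
        hCcl ▸ (⟨closure_mono hC0sub hz1, hGΘ j hzG, hzKc⟩ : z ∈ closure C ∩ (Θ \ K))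
      exact ⟨z, hzC, hzG⟩
    · right
      have hclosed : closure C ∩ Θ ⊆ C := by
        intro y hy
        have hyK : y ∉ K := fun h => hcase ⟨y, hy.1, h⟩
        exact hCcl ▸ (⟨hy.1, hy.2, hyK⟩ : y ∈ closure C ∩ (Θ \ K))
      have hΘC : Θ ⊆ C := by
        apply hΘconn.isPreconnected.subset_left_of_subset_union hCopen
          (hΘopen.inter isClosed_closure.isOpen_compl)
          (disjoint_left.mpr fun y hyC hyv => hyv.2 (subset_closure hyC))
          ?_ ⟨p, hpΘK.1, mem_connectedComponentIn hpΘK⟩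
        intro y hy
        by_cases hycl : y ∈ closure C
        · exact Or.inl (hclosed ⟨hycl, hy⟩)
        · exact Or.inr ⟨hy, hycl⟩
      exact Subset.antisymm ((connectedComponentIn_subset _ _).trans diff_subset) hΘC
  refine ⟨?_, ?_, ?_⟩
  · -- injectivity
    intro j k hjk
    have hjk' : E j ∩ Θ = E k ∩ Θ := hjk
    have hxj : x j ∈ E k ∩ Θ := hjk' ▸ (⟨hxE j, hxΘ j⟩ : x j ∈ E j ∩ Θ)
    exact hEinj ((hEcomp j _ (hxE j)).symm.trans (hEcomp k _ hxj.1))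
  · -- each E j ∩ Θ is a component of Θ \ K with noncompact closure in Θ
    intro j
    constructor
    · refine ⟨x j, hxΘK j, ?_⟩
      apply Subset.antisymm
      · intro q hq
        rcases claim2 j q hq with hq1 | hq1
        · rcases claim2 j (x j) ⟨hxE j, hxΘ j⟩ with hx1 | hx1
          · obtain ⟨g1, hg1C, hg1G⟩ := hq1
            obtain ⟨g2, hg2C, hg2G⟩ := hx1
            have hGΘK : G j ⊆ Θ \ K := fun y hy => ⟨hGΘ j hy, hEco j (hGE j hy)⟩
            have hA1 : IsPreconnected (connectedComponentIn (Θ \ K) q ∪ G j) :=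
              IsPreconnected.union g1 hg1C hg1G isPreconnected_connectedComponentIn
                (hGconn j).isPreconnected
            have hA2 : IsPreconnected ((connectedComponentIn (Θ \ K) q ∪ G j) ∪
                connectedComponentIn (Θ \ K) (x j)) :=
              IsPreconnected.union g2 (mem_union_right _ hg2G) hg2C hA1
                isPreconnected_connectedComponentIn
            have hA2sub : ((connectedComponentIn (Θ \ K) q ∪ G j) ∪
                connectedComponentIn (Θ \ K) (x j)) ⊆ Θ \ K :=
              union_subset (union_subset (connectedComponentIn_subset _ _) hGΘK)
                (connectedComponentIn_subset _ _)
            have hxA2 : x j ∈ ((connectedComponentIn (Θ \ K) q ∪ G j) ∪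
                connectedComponentIn (Θ \ K) (x j)) :=
              mem_union_right _ (mem_connectedComponentIn (hxΘK j))
            have := hA2.subset_connectedComponentIn hxA2 hA2sub
            exact this (mem_union_left _ (mem_union_left _
              (mem_connectedComponentIn ⟨hq.2, hEco j hq.1⟩)))
          · rw [hx1]; exact hq.2
        · have hΘK : Θ ⊆ Θ \ K := by
            intro y hy
            rw [← hq1] at hy
            exact connectedComponentIn_subset _ _ hy
          exact hΘconn.isPreconnected.subset_connectedComponentIn (hxΘ j) hΘK hq.2
      · exact claim1 j (x j) ⟨hxE j, hxΘ j⟩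
    · -- noncompact closure in Θ
      intro hcpt
      have h1 : E j ∩ Θ ⊆ closure (E j ∩ Θ) ∩ Θ := subset_inter subset_closure inter_subset_right
      have h2 : closure (E j ∩ Θ) ⊆ Θ :=
        (closure_minimal h1 hcpt.isClosed).trans inter_subset_right
      have hsub : E j ⊆ E j ∩ Θ := by
        apply (hEconn j).isPreconnected.subset_left_of_subset_union
          ((hEopen j).inter hΘopen) isClosed_closure.isOpen_compl
          (disjoint_left.mpr fun y hy h => h (subset_closure hy))
          ?_ ⟨x j, hxE j, hxE j, hxΘ j⟩
        intro y hy
        by_cases hycl : y ∈ closure (E j ∩ Θ)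
        · exact Or.inl ⟨hy, h2 hycl⟩
        · exact Or.inr hycl
      apply (hEprop j).2
      have hEA : E j = E j ∩ Θ := hsub.antisymm inter_subset_left
      have hcl : closure (E j) ⊆ closure (E j ∩ Θ) ∩ Θ := by
        calc closure (E j) = closure (E j ∩ Θ) := by rw [← hEA]
          _ ⊆ closure (E j ∩ Θ) ∩ Θ := subset_inter Subset.rfl h2
      exact hcpt.of_isClosed_subset isClosed_closure hcl
  · -- the union
    apply Subset.antisymm
    · exact iUnion_subset fun j y hy => ⟨hy.2, hEco j hy.1⟩
    · intro q hq
      have hqKc : q ∈ (Kᶜ : Set M) := hq.2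
      rw [← hEunion] at hqKc
      obtain ⟨j, hj⟩ := mem_iUnion.mp hqKc
      exact mem_iUnion.mpr ⟨j, hj, hq.1⟩
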